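/- Under the hypothesis of the super-multiplicativity inequality per((H_{2^n}⊗I_{2^m})(I_{2^n}⊗H_{2^m})) ≥ per(H_{2^n}⊗I_{2^m})·per(I_{2^n}⊗H_{2^m}) for given n,m ≥ 2, one has per(H_{2^{n+m}}) ≥ (per H_{2^n})^{2^m} · (per H_{2^m})^{2^n}. -/

import Mathlib

open Matrix Kronecker

def H2 : Matrix (Fin 2) (Fin 2) ℤ := !![1, 1; 1, -1]

/-- The Sylvester Hadamard matrix of order `2^k`, the Kronecker product of `k` copies of `H2`. -/
def sylvester (k : ℕ) : Matrix (Fin k → Fin 2) (Fin k → Fin 2) ℤ :=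
  fun g h => ∏ i, H2 (g i) (h i)

open Equiv Finset in
theorem permanent_submatrix_equiv {n n' R : Type*} [DecidableEq n] [Fintype n] [DecidableEq n']
    [Fintype n'] [CommSemiring R] (e : n' ≃ n) (M : Matrix n n R) :
    (M.submatrix e e).permanent = M.permanent := by
  unfold Matrix.permanent
  rw [← Equiv.sum_comp e.permCongr (fun σ : Perm n => ∏ i, M (σ i) i)]
  refine Finset.sum_congr rfl fun σ _ => ?_
  rw [← e.prod_comp (fun i => M (e.permCongr σ i) i)]
  refine Finset.prod_congr rfl fun i _ => ?_
  simp [Equiv.permCongr_apply]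

open Equiv Finset in
theorem permanent_blockDiagonal {n R o : Type*} [DecidableEq n] [Fintype n] [CommSemiring R]
    [Fintype o] [DecidableEq o] (M : o → Matrix n n R) :
    (blockDiagonal M).permanent = ∏ k, (M k).permanent := by
  simp_rw [Matrix.permanent]
  rw [Finset.prod_sum]
  simp_rw [Finset.prod_attach_univ, Finset.univ_pi_univ]
  let preserving_snd : Finset (Equiv.Perm (n × o)) := {σ | ∀ x, (σ x).snd = x.snd}
  have mem_preserving_snd :
    ∀ {σ : Equiv.Perm (n × o)}, σ ∈ preserving_snd ↔ ∀ x, (σ x).snd = x.snd := fun {σ} =>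
    Finset.mem_filter.trans ⟨fun h => h.2, fun h => ⟨Finset.mem_univ _, h⟩⟩
  rw [← Finset.sum_subset (Finset.subset_univ preserving_snd) _]
  · refine (Finset.sum_bij (fun σ _ => prodCongrLeft fun k ↦ σ k (mem_univ k)) ?_ ?_ ?_ ?_).symm
    · intro σ _
      rw [mem_preserving_snd]
      rintro ⟨-, x⟩
      simp only [prodCongrLeft_apply]
    · intro σ _ σ' _ eq
      ext x hx k
      have :
        ∀ k x,
          prodCongrLeft (fun k => σ k (Finset.mem_univ _)) (k, x) =
            prodCongrLeft (fun k => σ' k (Finset.mem_univ _)) (k, x) :=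
        fun k x => by rw [eq]
      simp only [prodCongrLeft_apply, Prod.mk.injEq] at this
      exact (this k x).1
    · intro σ hσ
      rw [mem_preserving_snd] at hσ
      have hσ' : ∀ x, (σ⁻¹ x).snd = x.snd := by
        intro x
        conv_rhs => rw [← (show σ (σ⁻¹ x) = x from σ.apply_symm_apply x), hσ]
      have mk_apply_eq : ∀ k x, ((σ (x, k)).fst, k) = σ (x, k) := by
        intro k x
        ext
        · simp only
        · simp only [hσ]
      have mk_inv_apply_eq : ∀ k x, ((σ⁻¹ (x, k)).fst, k) = σ⁻¹ (x, k) := by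
        intro k x
        conv_lhs => rw [← (show σ (σ⁻¹ (x, k)) = (x, k) from σ.apply_symm_apply (x, k))]
        ext
        · simp only [Perm.coe_inv, Equiv.apply_symm_apply]
        · simp only [hσ']
      refine ⟨fun k _ => ⟨fun x => (σ (x, k)).fst, fun x => (σ⁻¹ (x, k)).fst, ?_, ?_⟩, ?_, ?_⟩
      · intro x
        simp only [mk_apply_eq, Perm.coe_inv, Equiv.symm_apply_apply]
      · intro x
        simp only [mk_inv_apply_eq]; simp only [Perm.coe_inv, Equiv.apply_symm_apply]
      · apply Finset.mem_univ
      · ext ⟨k, x⟩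
        · simp only [coe_fn_mk, prodCongrLeft_apply]
        · simp only [prodCongrLeft_apply, hσ]
    · intro σ _
      rw [← Finset.univ_product_univ, Finset.prod_product_right]
      simp only [blockDiagonal_apply_eq, prodCongrLeft_apply]
  · intro σ _ hσ
    rw [mem_preserving_snd] at hσ
    obtain ⟨⟨k, x⟩, hkx⟩ := not_forall.mp hσ
    rw [Finset.prod_eq_zero (Finset.mem_univ (k, x))]
    rw [blockDiagonal_apply_ne]
    exact hkx

theorem permanent_one_kronecker {α n R : Type*} [DecidableEq n] [Fintype n] [DecidableEq α]
    [Fintype α] [CommSemiring R] (B : Matrix n n R) :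
    ((1 : Matrix α α R) ⊗ₖ B).permanent = B.permanent ^ Fintype.card α := by
  have h1 : (1 : Matrix α α R) = diagonal (fun _ => 1) := by simp [diagonal_one]
  rw [h1, kroneckerMap_diagonal_left _ (fun b => zero_mul b)]
  rw [Matrix.reindex_apply, permanent_submatrix_equiv, permanent_blockDiagonal]
  have hmap : (B.map fun b => (1 : R) * b) = B := by ext i j; simp
  simp only [hmap, Finset.prod_const, Finset.card_univ]

theorem permanent_kronecker_one {α n R : Type*} [DecidableEq n] [Fintype n] [DecidableEq α]
    [Fintype α] [CommSemiring R] (A : Matrix n n R) :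
    (A ⊗ₖ (1 : Matrix α α R)).permanent = A.permanent ^ Fintype.card α := by
  have h1 : (1 : Matrix α α R) = diagonal (fun _ => 1) := by simp [diagonal_one]
  rw [h1, kroneckerMap_diagonal_right _ (fun b => mul_zero b)]
  have hmap : A.map (fun b => b * (1 : R)) = A := by ext i j; simp
  simp only [hmap]
  rw [permanent_blockDiagonal, Finset.prod_const, Finset.card_univ]

def pairEquiv (n m : ℕ) : (Fin (n + m) → Fin 2) ≃ (Fin n → Fin 2) × (Fin m → Fin 2) :=
  (Equiv.arrowCongr finSumFinEquiv.symm (Equiv.refl (Fin 2))).trans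
    (Equiv.sumArrowEquivProdArrow _ _ _)

theorem sylvester_add (n m : ℕ) :
    sylvester (n + m) =
      (sylvester n ⊗ₖ sylvester m).submatrix (pairEquiv n m) (pairEquiv n m) := by
  ext g h
  simp only [sylvester, submatrix_apply, kroneckerMap_apply, pairEquiv, Equiv.trans_apply,
    Equiv.sumArrowEquivProdArrow, Equiv.arrowCongr_apply, Equiv.coe_fn_mk, Equiv.coe_refl,
    Function.comp_apply, Equiv.symm_symm, Function.comp, id]
  rw [← finSumFinEquiv.prod_comp (fun i => H2 (g i) (h i)), Fintype.prod_sum_type]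

theorem permanent_sylvester_supermultiplicative (n m : ℕ) (hn : 2 ≤ n) (hm : 2 ≤ m)
    (hyp : ((sylvester n ⊗ₖ (1 : Matrix (Fin m → Fin 2) (Fin m → Fin 2) ℤ)) *
          ((1 : Matrix (Fin n → Fin 2) (Fin n → Fin 2) ℤ) ⊗ₖ sylvester m)).permanent ≥
        (sylvester n ⊗ₖ (1 : Matrix (Fin m → Fin 2) (Fin m → Fin 2) ℤ)).permanent *
          ((1 : Matrix (Fin n → Fin 2) (Fin n → Fin 2) ℤ) ⊗ₖ sylvester m).permanent) :
    (sylvester (n + m)).permanent ≥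
      (sylvester n).permanent ^ (2 ^ m) * (sylvester m).permanent ^ (2 ^ n) := by
  have hcard : ∀ k : ℕ, Fintype.card (Fin k → Fin 2) = 2 ^ k := by
    intro k; simp [Fintype.card_fun]
  have key : (sylvester (n + m)).permanent = (sylvester n ⊗ₖ sylvester m).permanent := by
    rw [sylvester_add]
    exact permanent_submatrix_equiv (pairEquiv n m) _
  have split : sylvester n ⊗ₖ sylvester m =
      (sylvester n ⊗ₖ (1 : Matrix (Fin m → Fin 2) (Fin m → Fin 2) ℤ)) *
        ((1 : Matrix (Fin n → Fin 2) (Fin n → Fin 2) ℤ) ⊗ₖ sylvester m) := by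
    rw [← Matrix.mul_kronecker_mul, Matrix.mul_one, Matrix.one_mul]
  rw [key, split]
  calc ((sylvester n ⊗ₖ (1 : Matrix (Fin m → Fin 2) (Fin m → Fin 2) ℤ)) *
          ((1 : Matrix (Fin n → Fin 2) (Fin n → Fin 2) ℤ) ⊗ₖ sylvester m)).permanent
      ≥ (sylvester n ⊗ₖ (1 : Matrix (Fin m → Fin 2) (Fin m → Fin 2) ℤ)).permanent *
          ((1 : Matrix (Fin n → Fin 2) (Fin n → Fin 2) ℤ) ⊗ₖ sylvester m).permanent := hyp
    _ = (sylvester n).permanent ^ (2 ^ m) * (sylvester m).permanent ^ (2 ^ n) := by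
        rw [permanent_kronecker_one, permanent_one_kronecker, hcard, hcard]
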